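/- Let Γ be a connected finite simple graph and let Λ be a connected subgraph of Γ with at least one edge. Let χ : BB(Γ) → ℝ be a nonzero character. Then χ(v·u⁻¹) = 0 for every edge (u,v) of Λ if and only if there exists a character χ̂ : A(Γ) → ℝ whose restriction to the subgroup BB(Γ) equals χ and such that χ̂(v) = 0 for every vertex v of Λ. -/

import Mathlib

def raagRels {V : Type} (G : SimpleGraph V) : Set (FreeGroup V) :=
  {r | ∃ v w : V, G.Adj v w ∧
    r = FreeGroup.of v * FreeGroup.of w * (FreeGroup.of v)⁻¹ * (FreeGroup.of w)⁻¹}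

/-- The right-angled Artin group of a simple graph. -/
abbrev RAAG {V : Type} (G : SimpleGraph V) : Type := PresentedGroup (raagRels G)

/-- The canonical generator of `RAAG G` corresponding to a vertex. -/
def raagGen {V : Type} (G : SimpleGraph V) (v : V) : RAAG G :=
  PresentedGroup.of (rels := raagRels G) v

/-- The homomorphism `A(Γ) → ℤ` sending every vertex generator to `1`. -/
def bbgChar {V : Type} (G : SimpleGraph V) : RAAG G →* Multiplicative ℤ :=
  PresentedGroup.toGroup (f := fun _ : V => Multiplicative.ofAdd (1 : ℤ)) (by
    rintro r ⟨v, w, -, rfl⟩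
    simp only [map_mul, map_inv, FreeGroup.lift_apply_of]
    group)

/-- The Bestvina–Brady group of a simple graph, as a subgroup of the RAAG. -/
def BBG {V : Type} (G : SimpleGraph V) : Subgroup (RAAG G) := (bbgChar G).ker

namespace Stmt15Aux

variable {V : Type} (G : SimpleGraph V)

lemma mem_bbg_iff (g : RAAG G) : g ∈ BBG G ↔ bbgChar G g = 1 := Iff.rfl

lemma bbgChar_gen (v : V) : bbgChar G (raagGen G v) = Multiplicative.ofAdd (1 : ℤ) :=
  PresentedGroup.toGroup.of _

lemma mk_of (v : V) :
    PresentedGroup.mk (raagRels G) (FreeGroup.of v) = raagGen G v := rfl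

lemma gen_commute {a b : V} (h : G.Adj a b) :
    Commute (raagGen G a) (raagGen G b) := by
  rw [← commutatorElement_eq_one_iff_commute]
  have hmem : FreeGroup.of a * FreeGroup.of b * (FreeGroup.of a)⁻¹ * (FreeGroup.of b)⁻¹ ∈
      Subgroup.normalClosure (raagRels G) :=
    Subgroup.subset_normalClosure ⟨a, b, h, rfl⟩
  have h1 : (PresentedGroup.mk (raagRels G))
      (FreeGroup.of a * FreeGroup.of b * (FreeGroup.of a)⁻¹ * (FreeGroup.of b)⁻¹) = 1 :=
    (QuotientGroup.eq_one_iff _).2 hmem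
  simpa [map_mul, map_inv, mk_of, commutatorElement_def] using h1

lemma edge_mem (a b : V) : raagGen G b * (raagGen G a)⁻¹ ∈ BBG G := by
  rw [mem_bbg_iff]
  simp only [map_mul, map_inv, bbgChar_gen]
  group

lemma conj_pow_mem {x : RAAG G} (hx : x ∈ BBG G) (u : V) (n : ℤ) :
    raagGen G u ^ n * x * raagGen G u ^ (-n) ∈ BBG G := by
  have hx' : bbgChar G x = 1 := hx
  rw [mem_bbg_iff]
  simp only [map_mul, map_zpow, bbgChar_gen, hx']
  group

lemma mem1 (u w : V) (n : ℤ) :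
    raagGen G u ^ n * raagGen G w * raagGen G u ^ (-(n+1)) ∈ BBG G := by
  rw [mem_bbg_iff]
  simp only [map_mul, map_zpow, bbgChar_gen]
  group

lemma mem2 (u w : V) (n : ℤ) :
    raagGen G u ^ n * (raagGen G w)⁻¹ * raagGen G u ^ (-(n-1)) ∈ BBG G := by
  rw [mem_bbg_iff]
  simp only [map_mul, map_inv, map_zpow, bbgChar_gen]
  group

lemma mem3 (u w : V) (n : ℤ) :
    raagGen G u ^ n * raagGen G w ^ (-n) ∈ BBG G := by
  rw [mem_bbg_iff]
  simp only [map_mul, map_zpow, bbgChar_gen]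
  group

lemma gen_conj_mem {x : RAAG G} (hx : x ∈ BBG G) (w : V) :
    raagGen G w * x * (raagGen G w)⁻¹ ∈ BBG G := by
  have hx' : bbgChar G x = 1 := hx
  rw [mem_bbg_iff]
  simp only [map_mul, map_inv, bbgChar_gen, hx']
  group

lemma gen_conj_mem' {x : RAAG G} (hx : x ∈ BBG G) (w : V) :
    (raagGen G w)⁻¹ * x * raagGen G w ∈ BBG G := by
  have hx' : bbgChar G x = 1 := hx
  rw [mem_bbg_iff]
  simp only [map_mul, map_inv, bbgChar_gen, hx']
  group

end Stmt15Aux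

open Stmt15Aux

/-- Let `Λ` be a connected subgraph of a connected graph `Γ` with at least one edge, and let
`χ` be a nonzero character of `BB(Γ)`. Then `χ` vanishes on (the group elements corresponding
to) all edges of `Λ` iff it admits an extension to a character of `A(Γ)` vanishing on all
vertices of `Λ`. -/
theorem stmt_15 {V : Type} [Fintype V] (G : SimpleGraph V) (hG : G.Connected)
    (Λ : G.Subgraph) (hΛ : Λ.Connected) (hedge : ∃ u v : V, Λ.Adj u v)
    (χ : ↥(BBG G) →* Multiplicative ℝ) (hχ : χ ≠ 1) :
    (∀ u v : V, Λ.Adj u v →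
      ∀ hm : raagGen G v * (raagGen G u)⁻¹ ∈ BBG G,
        χ ⟨raagGen G v * (raagGen G u)⁻¹, hm⟩ = 1) ↔
    (∃ χext : RAAG G →* Multiplicative ℝ,
      χext.comp (BBG G).subtype = χ ∧ ∀ v ∈ Λ.verts, χext (raagGen G v) = 1) := by
  classical
  obtain ⟨u₀, v₀, hadj0⟩ := hedge
  constructor
  · intro hvanish
    -- the total extension of χ by junk
    obtain ⟨χ', hχ'⟩ : ∃ c : RAAG G → Multiplicative ℝ,
        ∀ g (h : g ∈ BBG G), c g = χ ⟨g, h⟩ :=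
      ⟨fun g => if h : g ∈ BBG G then χ ⟨g, h⟩ else 1, fun g h => dif_pos h⟩
    have hχ'mul : ∀ a b, a ∈ BBG G → b ∈ BBG G → χ' (a * b) = χ' a * χ' b := by
      intro a b ha hb
      rw [hχ' a ha, hχ' b hb, hχ' (a * b) (mul_mem ha hb), ← map_mul]
      rfl
    have hχ'inv : ∀ a, a ∈ BBG G → χ' a⁻¹ = (χ' a)⁻¹ := by
      intro a ha
      rw [hχ' a ha, hχ' a⁻¹ (inv_mem ha),
        show (⟨a⁻¹, inv_mem ha⟩ : ↥(BBG G)) = (⟨a, ha⟩ : ↥(BBG G))⁻¹ from rfl, map_inv]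
    have hχ'conj : ∀ g x, g ∈ BBG G → x ∈ BBG G → χ' (g * x * g⁻¹) = χ' x := by
      intro g x hg hx
      rw [hχ'mul _ _ (mul_mem hg hx) (inv_mem hg), hχ'mul _ _ hg hx, hχ'inv _ hg,
        mul_comm (χ' g) (χ' x), mul_inv_cancel_right]
    -- the candidate extension
    have hfrel : ∀ r ∈ raagRels G, FreeGroup.lift
        (fun v => χ ⟨raagGen G v * (raagGen G u₀)⁻¹, edge_mem G u₀ v⟩) r = 1 := by
      rintro r ⟨a, b, -, rfl⟩
      simp only [map_mul, map_inv, FreeGroup.lift_apply_of]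
      rw [mul_comm (χ ⟨raagGen G a * (raagGen G u₀)⁻¹, edge_mem G u₀ a⟩)
        (χ ⟨raagGen G b * (raagGen G u₀)⁻¹, edge_mem G u₀ b⟩)]
      group
    obtain ⟨χhat, hχhat_gen⟩ : ∃ ψ : RAAG G →* Multiplicative ℝ,
        ∀ v, ψ (raagGen G v) = χ ⟨raagGen G v * (raagGen G u₀)⁻¹, edge_mem G u₀ v⟩ :=
      ⟨PresentedGroup.toGroup hfrel, fun v => PresentedGroup.toGroup.of hfrel⟩
    have hχhat_conj : ∀ (g x : RAAG G), χhat (g * x * g⁻¹) = χhat x := by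
      intro g x
      rw [map_mul, map_mul, map_inv, mul_comm (χhat g) (χhat x), mul_inv_cancel_right]
    -- the key subgroup
    obtain ⟨K, hK⟩ : ∃ K : Subgroup (RAAG G), ∀ g, g ∈ K ↔
        (g ∈ BBG G ∧ ∀ n : ℤ,
          χ' (raagGen G u₀ ^ n * g * raagGen G u₀ ^ (-n)) = χhat g) := by
      refine ⟨⟨⟨⟨{g | g ∈ BBG G ∧ ∀ n : ℤ,
          χ' (raagGen G u₀ ^ n * g * raagGen G u₀ ^ (-n)) = χhat g}, ?_⟩, ?_⟩, ?_⟩,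
          fun g => Iff.rfl⟩
      · rintro a b ⟨ha1, ha2⟩ ⟨hb1, hb2⟩
        refine ⟨mul_mem ha1 hb1, fun n => ?_⟩
        have e : raagGen G u₀ ^ n * (a * b) * raagGen G u₀ ^ (-n) =
            (raagGen G u₀ ^ n * a * raagGen G u₀ ^ (-n)) *
            (raagGen G u₀ ^ n * b * raagGen G u₀ ^ (-n)) := by group
        rw [e, hχ'mul _ _ (conj_pow_mem G ha1 u₀ n) (conj_pow_mem G hb1 u₀ n),
          ha2 n, hb2 n, map_mul]
      · refine ⟨one_mem _, fun n => ?_⟩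
        have e : raagGen G u₀ ^ n * (1 : RAAG G) * raagGen G u₀ ^ (-n) = 1 := by group
        rw [e, hχ' 1 (one_mem _), map_one]
        exact map_one χ
      · rintro a ⟨ha1, ha2⟩
        refine ⟨inv_mem ha1, fun n => ?_⟩
        have e : raagGen G u₀ ^ n * a⁻¹ * raagGen G u₀ ^ (-n) =
            (raagGen G u₀ ^ n * a * raagGen G u₀ ^ (-n))⁻¹ := by group
        rw [e, hχ'inv _ (conj_pow_mem G ha1 u₀ n), ha2 n, map_inv]
    -- conjugation by generators preserves K
    have hgen_conj : ∀ (w : V) (x : RAAG G), x ∈ K →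
        raagGen G w * x * (raagGen G w)⁻¹ ∈ K := by
      intro w x hx
      obtain ⟨hx1, hx2⟩ := (hK x).1 hx
      refine (hK _).2 ⟨gen_conj_mem G hx1 w, fun n => ?_⟩
      have e : raagGen G u₀ ^ n * (raagGen G w * x * (raagGen G w)⁻¹) * raagGen G u₀ ^ (-n) =
          (raagGen G u₀ ^ n * raagGen G w * raagGen G u₀ ^ (-(n+1))) *
          (raagGen G u₀ ^ (n+1) * x * raagGen G u₀ ^ (-(n+1))) *
          (raagGen G u₀ ^ n * raagGen G w * raagGen G u₀ ^ (-(n+1)))⁻¹ := by group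
      rw [e, hχ'conj _ _ (mem1 G u₀ w n) (conj_pow_mem G hx1 u₀ (n+1)), hx2 (n+1),
        hχhat_conj]
    have hgen_conj' : ∀ (w : V) (x : RAAG G), x ∈ K →
        (raagGen G w)⁻¹ * x * raagGen G w ∈ K := by
      intro w x hx
      obtain ⟨hx1, hx2⟩ := (hK x).1 hx
      refine (hK _).2 ⟨gen_conj_mem' G hx1 w, fun n => ?_⟩
      have e : raagGen G u₀ ^ n * ((raagGen G w)⁻¹ * x * raagGen G w) * raagGen G u₀ ^ (-n) =
          (raagGen G u₀ ^ n * (raagGen G w)⁻¹ * raagGen G u₀ ^ (-(n-1))) *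
          (raagGen G u₀ ^ (n-1) * x * raagGen G u₀ ^ (-(n-1))) *
          (raagGen G u₀ ^ n * (raagGen G w)⁻¹ * raagGen G u₀ ^ (-(n-1)))⁻¹ := by group
      rw [e, hχ'conj _ _ (mem2 G u₀ w n) (conj_pow_mem G hx1 u₀ (n-1)), hx2 (n-1)]
      have e2 : (raagGen G w)⁻¹ * x * raagGen G w =
          (raagGen G w)⁻¹ * x * ((raagGen G w)⁻¹)⁻¹ := by group
      rw [e2, hχhat_conj]
    -- K is normal
    have hKnorm : K.Normal := by
      have key : ∀ g : RAAG G, ∀ x ∈ K, g * x * g⁻¹ ∈ K := by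
        intro g
        refine PresentedGroup.induction_on
          (C := fun g => ∀ x ∈ K, g * x * g⁻¹ ∈ K) g ?_
        intro z
        induction z using FreeGroup.induction_on with
        | C1 =>
          intro x hx
          rw [map_one]
          simpa using hx
        | of v => exact hgen_conj v
        | inv_of v _ =>
          intro x hx
          rw [map_inv]
          exact hgen_conj' v x hx
        | mul y z hy hz =>
          intro x hx
          rw [map_mul]
          have e : PresentedGroup.mk (raagRels G) y * PresentedGroup.mk (raagRels G) z * x *
              (PresentedGroup.mk (raagRels G) y * PresentedGroup.mk (raagRels G) z)⁻¹ =
              PresentedGroup.mk (raagRels G) y *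
              (PresentedGroup.mk (raagRels G) z * x * (PresentedGroup.mk (raagRels G) z)⁻¹) *
              (PresentedGroup.mk (raagRels G) y)⁻¹ := by group
          rw [e]
          exact hy _ (hz x hx)
      exact ⟨fun x hx g => key g x hx⟩
    -- edges of G give elements of K
    have hedgeK : ∀ a b : V, G.Adj a b → raagGen G b * (raagGen G a)⁻¹ ∈ K := by
      intro a b hab
      refine (hK _).2 ⟨edge_mem G a b, fun n => ?_⟩
      have hc : raagGen G a ^ (-n) * raagGen G b = raagGen G b * raagGen G a ^ (-n) :=
        ((gen_commute G hab).zpow_left (-n)).eq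
      have e : raagGen G u₀ ^ n * (raagGen G b * (raagGen G a)⁻¹) * raagGen G u₀ ^ (-n) =
          (raagGen G u₀ ^ n * raagGen G a ^ (-n)) * (raagGen G b * (raagGen G a)⁻¹) *
          (raagGen G u₀ ^ n * raagGen G a ^ (-n))⁻¹ := by
        have e1 : (raagGen G u₀ ^ n * raagGen G a ^ (-n)) * (raagGen G b * (raagGen G a)⁻¹) *
            (raagGen G u₀ ^ n * raagGen G a ^ (-n))⁻¹ =
            raagGen G u₀ ^ n * (raagGen G a ^ (-n) * raagGen G b) *
            ((raagGen G a)⁻¹ * (raagGen G a ^ (-n))⁻¹ * raagGen G u₀ ^ (-n)) := by group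
        rw [e1, hc]
        group
      rw [e, hχ'conj _ _ (mem3 G u₀ a n) (edge_mem G a b), hχ' _ (edge_mem G a b),
        map_mul, map_inv, hχhat_gen, hχhat_gen, ← map_inv, ← map_mul]
      congr 1
      apply Subtype.ext
      show raagGen G b * (raagGen G a)⁻¹ =
        (raagGen G b * (raagGen G u₀)⁻¹) * (raagGen G a * (raagGen G u₀)⁻¹)⁻¹
      group
    -- walks give elements of K
    have hwalkK : ∀ (a b : V) (p : G.Walk a b), raagGen G b * (raagGen G a)⁻¹ ∈ K := by
      intro a b p
      induction p with
      | nil =>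
        rw [mul_inv_cancel]
        exact one_mem K
      | @cons a c b h p ih =>
        have e : raagGen G b * (raagGen G a)⁻¹ =
            (raagGen G b * (raagGen G c)⁻¹) * (raagGen G c * (raagGen G a)⁻¹) := by group
        rw [e]
        exact mul_mem ih (hedgeK a c h)
    -- BBG ≤ normalClosure S ≤ K
    have hBK : BBG G ≤ K := by
      set S : Set (RAAG G) := Set.range (fun v => raagGen G v * (raagGen G u₀)⁻¹) with hS
      have hSsub : S ⊆ ↑K := by
        rintro _ ⟨v, rfl⟩
        obtain ⟨p⟩ := hG.preconnected u₀ v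
        exact hwalkK u₀ v p
      have hBle : BBG G ≤ Subgroup.normalClosure S := by
        intro g hg
        have hhom : QuotientGroup.mk' (Subgroup.normalClosure S) =
            (zpowersHom _ ((QuotientGroup.mk' (Subgroup.normalClosure S))
              (raagGen G u₀))).comp (bbgChar G) := by
          refine PresentedGroup.ext fun v => ?_
          rw [MonoidHom.comp_apply,
            show bbgChar G (PresentedGroup.of v) = Multiplicative.ofAdd 1 from bbgChar_gen G v,
            zpowersHom_apply, toAdd_ofAdd, zpow_one]
          have hmem : raagGen G v * (raagGen G u₀)⁻¹ ∈ Subgroup.normalClosure S :=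
            Subgroup.subset_normalClosure ⟨v, rfl⟩
          have h1 : QuotientGroup.mk' (Subgroup.normalClosure S)
              (raagGen G v * (raagGen G u₀)⁻¹) = 1 := by
            rwa [← QuotientGroup.ker_mk' (Subgroup.normalClosure S),
              MonoidHom.mem_ker] at hmem
          rw [map_mul, map_inv] at h1
          exact mul_inv_eq_one.1 h1
        have h2 : QuotientGroup.mk' (Subgroup.normalClosure S) g = 1 := by
          rw [hhom, MonoidHom.comp_apply, show bbgChar G g = 1 from hg, map_one]
        rwa [← QuotientGroup.ker_mk' (Subgroup.normalClosure S), MonoidHom.mem_ker]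
      haveI := hKnorm
      exact le_trans hBle (Subgroup.normalClosure_le_normal hSsub)
    -- assemble
    refine ⟨χhat, ?_, ?_⟩
    · apply MonoidHom.ext
      rintro ⟨g, hg⟩
      obtain ⟨-, h2⟩ := (hK g).1 (hBK hg)
      have h0 := h2 0
      have e : raagGen G u₀ ^ (0:ℤ) * g * raagGen G u₀ ^ (-(0:ℤ)) = g := by group
      rw [e, hχ' g hg] at h0
      exact h0.symm
    · intro v hv
      rw [hχhat_gen v]
      have hu₀ : u₀ ∈ Λ.verts := hadj0.fst_mem
      have claim : ∀ (a b : Λ.verts) (p : Λ.coe.Walk a b)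
          (h : raagGen G (b : V) * (raagGen G (a : V))⁻¹ ∈ BBG G),
          χ ⟨raagGen G (b : V) * (raagGen G (a : V))⁻¹, h⟩ = 1 := by
        intro a b p
        induction p with
        | nil =>
          intro h
          rw [show (⟨_, h⟩ : ↥(BBG G)) = 1 from Subtype.ext (mul_inv_cancel _), map_one]
        | @cons a c b h p ih =>
          intro hmem
          have hadj : Λ.Adj (a : V) (c : V) := h
          have e : (⟨raagGen G (b : V) * (raagGen G (a : V))⁻¹, hmem⟩ : ↥(BBG G)) =
              ⟨raagGen G (b : V) * (raagGen G (c : V))⁻¹, edge_mem G (c : V) (b : V)⟩ *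
              ⟨raagGen G (c : V) * (raagGen G (a : V))⁻¹, edge_mem G (a : V) (c : V)⟩ := by
            apply Subtype.ext
            show raagGen G (b : V) * (raagGen G (a : V))⁻¹ =
              (raagGen G (b : V) * (raagGen G (c : V))⁻¹) *
              (raagGen G (c : V) * (raagGen G (a : V))⁻¹)
            group
          rw [e, map_mul, ih (edge_mem G (c : V) (b : V)),
            hvanish (a : V) (c : V) hadj (edge_mem G (a : V) (c : V)), one_mul]
      obtain ⟨p⟩ := hΛ.coe ⟨u₀, hu₀⟩ ⟨v, hv⟩
      exact claim ⟨u₀, hu₀⟩ ⟨v, hv⟩ p (edge_mem G u₀ v)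
  · rintro ⟨χe, hcomp, hvan⟩ u v huv hm
    have h1 : χ ⟨raagGen G v * (raagGen G u)⁻¹, hm⟩ =
        χe (raagGen G v * (raagGen G u)⁻¹) := by
      rw [← hcomp]; rfl
    rw [h1, map_mul, map_inv, hvan v huv.snd_mem, hvan u huv.fst_mem]
    simp
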